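/- arXiv:1709.08840 — 5 statements merged into one kernel-verified Lean document; each statement's English description precedes it below -/
import Mathlib

section
/- Let A be a real n × n matrix all of whose complex eigenvalues have modulus strictly less than 1. Then det(I − A) > 0. -/
open Matrix Polynomial

lemma eval_charpoly_aux {n : ℕ} (M : Matrix (Fin n) (Fin n) ℂ) (μ : ℂ) :
    M.charpoly.eval μ = (μ • (1 : Matrix (Fin n) (Fin n) ℂ) - M).det := by
  rw [Matrix.charpoly, _root_.eval_det, Matrix.matPolyEquiv_charmatrix]
  simp only [Polynomial.eval_sub, Polynomial.eval_X, Polynomial.eval_C]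
  congr 1
  ext i j
  by_cases h : i = j <;>
    simp [h, Matrix.scalar_apply, Matrix.diagonal_apply, Matrix.one_apply, Matrix.smul_apply,
      Matrix.sub_apply]

/-- Let `A` be a real `n × n` matrix all of whose complex eigenvalues
(i.e. roots in `ℂ` of its characteristic polynomial) have modulus strictly less than `1`.
Then `det (I − A) > 0`. -/
theorem det_one_sub_pos_of_spectral_radius_lt_one
    {n : ℕ} (A : Matrix (Fin n) (Fin n) ℝ)
    (hA : ∀ μ : ℂ, (Matrix.charpoly (A.map (algebraMap ℝ ℂ))).IsRoot μ → ‖μ‖ < 1) :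
    0 < (1 - A).det := by
  set f : ℝ → ℝ := fun t => (1 - t • A).det with hf
  have hcont : Continuous f := by
    apply Continuous.matrix_det
    fun_prop
  have hf0 : f 0 = 1 := by simp [hf]
  have hne : ∀ t ∈ Set.Icc (0:ℝ) 1, f t ≠ 0 := by
    rintro t ⟨ht0, ht1⟩ hzero
    rcases eq_or_lt_of_le ht0 with h | htpos
    · rw [← h] at hzero; simp [hf] at hzero
    · -- over ℂ, det (1 - t • Ac) = 0
      set Ac := A.map (algebraMap ℝ ℂ) with hAc
      have h1 : ((algebraMap ℝ ℂ).mapMatrix (1 - t • A)).det = 0 := by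
        rw [← RingHom.map_det, show ((1 : Matrix (Fin n) (Fin n) ℝ) - t • A).det = 0 from hzero,
          map_zero]
      have hdetC : ((1 : Matrix (Fin n) (Fin n) ℂ) - (t : ℂ) • Ac).det = 0 := by
        rw [← h1]
        congr 1
        ext i j
        simp [hAc, RingHom.mapMatrix_apply, Matrix.map_apply, Matrix.sub_apply,
          Matrix.one_apply, Matrix.smul_apply, apply_ite]
      have htne : (t : ℂ) ≠ 0 := by exact_mod_cast htpos.ne'
      have key : (((1:ℝ)/t : ℂ) • (1 : Matrix (Fin n) (Fin n) ℂ) - Ac).det = 0 := by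
        have : (((1:ℝ)/t : ℂ) • (1 : Matrix (Fin n) (Fin n) ℂ) - Ac)
            = ((1:ℝ)/t : ℂ) • ((1 : Matrix (Fin n) (Fin n) ℂ) - (t : ℂ) • Ac) := by
          rw [smul_sub, smul_smul]
          push_cast
          rw [one_div, inv_mul_cancel₀ htne, one_smul]
        rw [this, Matrix.det_smul, hdetC, mul_zero]
      have hroot : Ac.charpoly.IsRoot ((1:ℝ)/t : ℂ) := by
        rw [Polynomial.IsRoot, eval_charpoly_aux, key]
      have := hA _ hroot
      have habs : ‖((1:ℝ)/t : ℂ)‖ = 1/t := by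
        push_cast
        simp [map_div₀, Complex.norm_real, abs_of_pos htpos]
      rw [habs] at this
      have : (1:ℝ)/t ≥ 1 := by
        rw [ge_iff_le, le_div_iff₀ htpos, one_mul]; exact ht1
      linarith
  by_contra hle
  push_neg at hle
  have hf1 : f 1 < 0 := lt_of_le_of_ne (by simpa [hf] using hle) (hne 1 ⟨zero_le_one, le_refl 1⟩)
  have : (0:ℝ) ∈ f '' Set.Icc 0 1 := by
    apply intermediate_value_Icc' zero_le_one hcont.continuousOn
    constructor <;> [exact hf1.le; simp [hf0]]
  obtain ⟨t, ht, htz⟩ := this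
  exact hne t ht htz
end

section
/- Let x̄ ∈ ℝⁿ satisfy 0 < x̄_i < 1 for all i and G(x̄) = x̄. Then the Jacobian matrix of G at x̄ has entries ∂G_i/∂x_i(x̄) = x̄_i and, for every j ≠ i, ∂G_i/∂x_j(x̄) = −x̄_i x̄_j/(1 − x̄_j). -/
/-- The denominator `d(x) = ∑ₖ γₖ ∏_{j≠k} (1 − xⱼ)` of the DeGroot–Friedkin map. -/
noncomputable def dDF {n : ℕ} (γ x : Fin n → ℝ) : ℝ :=
  ∑ k, γ k * ∏ j ∈ Finset.univ.erase k, (1 - x j)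

/-- The DeGroot–Friedkin self-appraisal map `G`, with
`Gᵢ(x) = γᵢ ∏_{j≠i} (1 − xⱼ) / d(x)`. -/
noncomputable def GDF {n : ℕ} (γ x : Fin n → ℝ) : Fin n → ℝ :=
  fun i => (γ i * ∏ j ∈ Finset.univ.erase i, (1 - x j)) / dDF γ x

open Finset ContinuousLinearMap

section
variable {n : ℕ} (γ xbar : Fin n → ℝ)

noncomputable def Pder (i : Fin n) : (Fin n → ℝ) →L[ℝ] ℝ :=
  ∑ j ∈ univ.erase i, (∏ l ∈ (univ.erase i).erase j, (1 - xbar l)) •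
    ((0 : (Fin n → ℝ) →L[ℝ] ℝ) - ContinuousLinearMap.proj j)

lemma hasFDerivAt_P (i : Fin n) :
    HasFDerivAt (fun y : Fin n → ℝ => ∏ j ∈ univ.erase i, (1 - y j)) (Pder xbar i) xbar :=
  HasFDerivAt.finset_prod (fun j _ =>
    (hasFDerivAt_const 1 xbar).sub (hasFDerivAt_apply j xbar))

lemma hasFDerivAt_d :
    HasFDerivAt (dDF γ) (∑ k, γ k • Pder xbar k) xbar :=
  HasFDerivAt.fun_sum (fun k _ => (hasFDerivAt_P xbar k).const_mul (γ k))

lemma hasFDerivAt_G (hD : dDF γ xbar ≠ 0) (i : Fin n) :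
    HasFDerivAt (fun y => GDF γ y i)
      ((γ i * ∏ j ∈ univ.erase i, (1 - xbar j)) •
        ((smulRight (1 : ℝ →L[ℝ] ℝ) (-(dDF γ xbar ^ 2)⁻¹)).comp (∑ k, γ k • Pder xbar k))
        + (dDF γ xbar)⁻¹ • (γ i • Pder xbar i)) xbar := by
  have hinv : HasFDerivAt (fun y => (dDF γ y)⁻¹)
      ((smulRight (1 : ℝ →L[ℝ] ℝ) (-(dDF γ xbar ^ 2)⁻¹)).comp (∑ k, γ k • Pder xbar k)) xbar :=
    (hasFDerivAt_inv hD).comp xbar (hasFDerivAt_d γ xbar)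
  have hN : HasFDerivAt (fun y : Fin n → ℝ => γ i * ∏ j ∈ univ.erase i, (1 - y j))
      (γ i • Pder xbar i) xbar := (hasFDerivAt_P xbar i).const_mul (γ i)
  have := hN.mul hinv
  simp only [GDF, div_eq_mul_inv]
  exact this

lemma Pder_apply_single (i j : Fin n) :
    Pder xbar i (Pi.single j 1) =
      if j = i then 0 else -(∏ l ∈ (univ.erase i).erase j, (1 - xbar l)) := by
  simp only [Pder, ContinuousLinearMap.sum_apply, ContinuousLinearMap.smul_apply,
    ContinuousLinearMap.sub_apply, ContinuousLinearMap.zero_apply, proj_apply,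
    Pi.single_apply, smul_eq_mul]
  rcases eq_or_ne j i with rfl | hji
  · simp
  · rw [Finset.sum_eq_single j]
    · simp [hji]
    · intro b hb hbj; simp [hbj]
    · intro hj; exact absurd (Finset.mem_erase.2 ⟨hji, Finset.mem_univ j⟩) hj

end

/-- Let `x̄ ∈ ℝⁿ` satisfy `0 < x̄ᵢ < 1` for all `i` and `G(x̄) = x̄`.
Then the Jacobian of `G` at `x̄` has entries `∂Gᵢ/∂xᵢ(x̄) = x̄ᵢ` and, for `j ≠ i`,
`∂Gᵢ/∂xⱼ(x̄) = −x̄ᵢ x̄ⱼ/(1 − x̄ⱼ)`. -/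
theorem GDF_jacobian_at_interior_fixed_point
    {n : ℕ} (hn : 3 ≤ n) (γ : Fin n → ℝ)
    (hγpos : ∀ i, 0 < γ i) (hγsum : ∑ i, γ i = 1)
    (xbar : Fin n → ℝ) (hx0 : ∀ i, 0 < xbar i) (hx1 : ∀ i, xbar i < 1)
    (hfix : GDF γ xbar = xbar) :
    (∀ i : Fin n,
      fderiv ℝ (fun y => GDF γ y i) xbar (Pi.single i 1) = xbar i) ∧
    (∀ i j : Fin n, j ≠ i →
      fderiv ℝ (fun y => GDF γ y i) xbar (Pi.single j 1) =
        -(xbar i * xbar j / (1 - xbar j))) := by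
  have hnpos : 0 < n := by omega
  have : Nonempty (Fin n) := ⟨⟨0, hnpos⟩⟩
  have hc : ∀ j, 0 < 1 - xbar j := fun j => by linarith [hx1 j]
  have hPpos : ∀ k : Fin n, 0 < ∏ l ∈ univ.erase k, (1 - xbar l) :=
    fun k => Finset.prod_pos (fun l _ => hc l)
  have hDpos : 0 < dDF γ xbar :=
    Finset.sum_pos (fun k _ => mul_pos (hγpos k) (hPpos k)) Finset.univ_nonempty
  have hfixk : ∀ k, γ k * ∏ l ∈ univ.erase k, (1 - xbar l) = xbar k * dDF γ xbar := by
    intro k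
    have h := congrFun hfix k
    simp only [GDF] at h
    rw [div_eq_iff hDpos.ne'] at h
    exact h
  have hQ : ∀ k j : Fin n, j ≠ k →
      (∏ l ∈ (univ.erase k).erase j, (1 - xbar l)) * (1 - xbar j)
        = ∏ l ∈ univ.erase k, (1 - xbar l) :=
    fun k j hjk => Finset.prod_erase_mul _ _ (Finset.mem_erase.2 ⟨hjk, Finset.mem_univ j⟩)
  have hSval : ∀ j, (∑ k, γ k • Pder xbar k) (Pi.single j 1) = -dDF γ xbar := by
    intro j
    simp only [ContinuousLinearMap.sum_apply, ContinuousLinearMap.smul_apply, smul_eq_mul,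
      Pder_apply_single]
    have h1 : (∑ k, γ k * (if j = k then 0
          else -(∏ l ∈ (univ.erase k).erase j, (1 - xbar l)))) * (1 - xbar j)
        = (-dDF γ xbar) * (1 - xbar j) := by
      rw [Finset.sum_mul]
      have h2 : ∀ k ∈ univ, γ k * (if j = k then 0
            else -(∏ l ∈ (univ.erase k).erase j, (1 - xbar l))) * (1 - xbar j)
          = -(γ k * ∏ l ∈ univ.erase k, (1 - xbar l))
            + (if j = k then γ k * ∏ l ∈ univ.erase k, (1 - xbar l) else 0) := by
        intro k _
        rcases eq_or_ne j k with rfl | h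
        · simp
        · rw [if_neg h, if_neg h,
            show γ k * (-(∏ l ∈ (univ.erase k).erase j, (1 - xbar l))) * (1 - xbar j)
              = -(γ k * ((∏ l ∈ (univ.erase k).erase j, (1 - xbar l)) * (1 - xbar j))) by ring,
            hQ k j h]
          ring
      rw [Finset.sum_congr rfl h2, Finset.sum_add_distrib, Finset.sum_ite_eq,
        if_pos (Finset.mem_univ j), Finset.sum_neg_distrib]
      have hd : ∑ k, γ k * ∏ l ∈ univ.erase k, (1 - xbar l) = dDF γ xbar := rfl
      rw [hd, hfixk j]
      ring
    exact mul_right_cancel₀ (hc j).ne' h1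
  have hval : ∀ i j : Fin n, fderiv ℝ (fun y => GDF γ y i) xbar (Pi.single j 1)
      = (γ i * ∏ l ∈ univ.erase i, (1 - xbar l)) * ((-dDF γ xbar) * (-(dDF γ xbar ^ 2)⁻¹))
        + (dDF γ xbar)⁻¹ * (γ i * (if j = i then 0
            else -(∏ l ∈ (univ.erase i).erase j, (1 - xbar l)))) := by
    intro i j
    rw [(hasFDerivAt_G γ xbar hDpos.ne' i).fderiv]
    simp only [ContinuousLinearMap.add_apply, ContinuousLinearMap.smul_apply,
      ContinuousLinearMap.coe_comp', Function.comp_apply, ContinuousLinearMap.smulRight_apply,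
      ContinuousLinearMap.one_apply, smul_eq_mul, hSval j, Pder_apply_single]
  constructor
  · intro i
    rw [hval i i, if_pos rfl, hfixk i]
    field_simp
    ring
  · intro i j hji
    rw [hval i j, if_neg hji]
    have hq : γ i * (∏ l ∈ (univ.erase i).erase j, (1 - xbar l)) * (1 - xbar j)
        = xbar i * dDF γ xbar := by rw [mul_assoc, hQ i j hji, hfixk i]
    rw [hfixk i]
    have hcj := (hc j).ne'
    have hD := hDpos.ne'
    field_simp
    nlinarith [hq]
end

section
/- Let n ≥ 3 and let x̄ ∈ ℝⁿ satisfy x̄_i > 0 for all i and ∑_{i=1}^n x̄_i = 1. Define the n × n real matrix M by M_{ii} = x̄_i and M_{ij} = −x̄_i x̄_j/(1 − x̄_j) for j ≠ i. Then all complex eigenvalues of M are real, trace(M) = 1, the eigenvalue 0 of M has algebraic multiplicity exactly one, and every nonzero eigenvalue of M lies in the open interval (0, 1). -/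
open Polynomial Matrix

lemma my_charpoly_eq_of_mul_eq {n : ℕ} {K : Type*} [Field K]
    (A B T : Matrix (Fin n) (Fin n) K) (hT : T.det ≠ 0) (h : A * T = T * B) :
    A.charpoly = B.charpoly := by
  set f : Matrix (Fin n) (Fin n) K →+* Matrix (Fin n) (Fin n) K[X] :=
    (C : K →+* K[X]).mapMatrix with hf
  have hcomm : ∀ Z : Matrix (Fin n) (Fin n) K[X],
      Matrix.scalar (Fin n) (X : K[X]) * Z = Z * Matrix.scalar (Fin n) (X : K[X]) := by
    intro Z
    exact (Matrix.scalar_commute (X : K[X]) (fun r' => Commute.all _ _) Z)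
  have key : A.charmatrix * f T = f T * B.charmatrix := by
    have h1 : A.charmatrix = Matrix.scalar (Fin n) (X : K[X]) - f A := rfl
    have h2 : B.charmatrix = Matrix.scalar (Fin n) (X : K[X]) - f B := rfl
    rw [h1, h2, sub_mul, mul_sub, ← map_mul f, h, map_mul f, hcomm]
  have hdet := congrArg Matrix.det key
  rw [Matrix.det_mul, Matrix.det_mul] at hdet
  have hdT : (f T).det = C T.det := by
    rw [hf, ← RingHom.map_det]
  rw [hdT, mul_comm] at hdet
  have hC : (C T.det : K[X]) ≠ 0 := by
    simpa using hT
  exact mul_left_cancel₀ hC hdet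

lemma my_charpoly_diagonal {n : ℕ} {K : Type*} [CommRing K] (d : Fin n → K) :
    (Matrix.diagonal d).charpoly = ∏ i, (X - C (d i)) := by
  have hcm : charmatrix (Matrix.diagonal d) = Matrix.diagonal fun i => (X : K[X]) - C (d i) := by
    ext i j
    by_cases hij : i = j
    · subst hij; simp
    · rw [charmatrix_apply_ne _ _ _ hij, Matrix.diagonal_apply_ne _ hij,
        Matrix.diagonal_apply_ne _ hij, map_zero, neg_zero]
  rw [Matrix.charpoly, hcm, Matrix.det_diagonal]


/-- Let `n ≥ 3` and let `x̄ ∈ ℝⁿ` satisfy `x̄ᵢ > 0` for all `i` and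
`∑ x̄ᵢ = 1`. Define `M` by `Mᵢᵢ = x̄ᵢ` and `Mᵢⱼ = −x̄ᵢ x̄ⱼ/(1 − x̄ⱼ)` for `j ≠ i`. Then
all complex eigenvalues of `M` are real, `trace(M) = 1`, the eigenvalue `0` has algebraic
multiplicity exactly one, and every nonzero eigenvalue of `M` lies in `(0, 1)`. -/
theorem jacobian_at_fixed_point_eigenvalues
    {n : ℕ} (hn : 3 ≤ n) (xbar : Fin n → ℝ)
    (hx0 : ∀ i, 0 < xbar i) (hxsum : ∑ i, xbar i = 1)
    (M : Matrix (Fin n) (Fin n) ℝ)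
    (hM : ∀ i j, M i j = if i = j then xbar i else -(xbar i * xbar j / (1 - xbar j))) :
    (∀ μ : ℂ, (Matrix.charpoly (M.map (algebraMap ℝ ℂ))).IsRoot μ → μ.im = 0) ∧
    M.trace = 1 ∧
    (Matrix.charpoly (M.map (algebraMap ℝ ℂ))).rootMultiplicity 0 = 1 ∧
    (∀ μ : ℂ, (Matrix.charpoly (M.map (algebraMap ℝ ℂ))).IsRoot μ → μ ≠ 0 →
      μ.im = 0 ∧ 0 < μ.re ∧ μ.re < 1) := by
  classical
  have hn1 : (1 : ℕ) < n := by omega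
  have hne : Nonempty (Fin n) := ⟨⟨0, by omega⟩⟩
  -- each coordinate is < 1
  have hxlt : ∀ i, xbar i < 1 := by
    intro i
    obtain ⟨j, -, hji⟩ := Finset.exists_mem_ne
      (by simpa using hn1 : 1 < (Finset.univ : Finset (Fin n)).card) i
    have h1 : xbar j ≤ ∑ k ∈ Finset.univ.erase i, xbar k :=
      Finset.single_le_sum (fun k _ => (hx0 k).le) (Finset.mem_erase.2 ⟨hji, Finset.mem_univ j⟩)
    have h2 : xbar i + ∑ k ∈ Finset.univ.erase i, xbar k = 1 := by
      rw [Finset.add_sum_erase _ _ (Finset.mem_univ i)]; exact hxsum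
    have := hx0 j
    linarith
  set y : Fin n → ℝ := fun i => 1 - xbar i with hydef
  have hy : ∀ i, 0 < y i := fun i => by simp only [hydef]; linarith [hxlt i]
  set q : Fin n → ℝ := fun i => Real.sqrt (y i) with hqdef
  have hq : ∀ i, 0 < q i := fun i => Real.sqrt_pos.2 (hy i)
  have hq2 : ∀ i, q i * q i = y i := fun i => Real.mul_self_sqrt (hy i).le
  set c : Fin n → ℝ := fun i => xbar i / y i with hcdef
  have hc : ∀ i, 0 < c i := fun i => div_pos (hx0 i) (hy i)
  set w : Fin n → ℝ := fun i => xbar i / q i with hwdef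
  have hw : ∀ i, 0 < w i := fun i => div_pos (hx0 i) (hq i)
  -- arithmetic identities
  have hA : ∀ i, c i - w i * w i = xbar i := by
    intro i
    have h2 := hq2 i
    have hyne := (hy i).ne'
    have hy' : y i = 1 - xbar i := by simp [hydef]
    simp only [hcdef, hwdef]
    rw [div_mul_div_comm, h2]
    field_simp
    nlinarith [hy']
  have hcq : ∀ i, c i * q i = w i := by
    intro i
    have h2 := hq2 i
    have := (hq i).ne'
    simp only [hcdef, hwdef]
    rw [← h2]
    field_simp
  have hwq : ∀ i, w i * q i = xbar i := by
    intro i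
    simp only [hwdef]
    exact div_mul_cancel₀ _ (hq i).ne'
  -- the symmetric matrix S
  set S : Matrix (Fin n) (Fin n) ℝ :=
    Matrix.of (fun i j => (if i = j then c i else 0) - w i * w j) with hSdef
  have hSapp : ∀ i j, S i j = (if i = j then c i else 0) - w i * w j := fun i j => rfl
  -- charpoly M = charpoly S
  have hMS : M.charpoly = S.charpoly := by
    apply my_charpoly_eq_of_mul_eq M S (Matrix.diagonal q)
    · rw [Matrix.det_diagonal]
      exact Finset.prod_ne_zero_iff.2 fun i _ => (hq i).ne'
    · ext i j
      rw [Matrix.mul_diagonal, Matrix.diagonal_mul, hM, hSapp]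
      by_cases hij : i = j
      · subst hij
        rw [if_pos rfl, if_pos rfl, hA]
        ring
      · simp only [if_neg hij]
        have h2 := hq2 j
        have := (hq j).ne'
        have := (hq i).ne'
        simp only [hwdef, hydef] at *
        rw [← h2]
        field_simp
        ring
  -- S is symmetric
  have hSherm : S.IsHermitian := by
    ext i j
    simp only [Matrix.conjTranspose_apply, hSapp, star_trivial]
    by_cases hij : i = j
    · subst hij; ring
    · rw [if_neg hij, if_neg (Ne.symm hij)]; ring
  -- mulVec formula
  have hSmul : ∀ u : Fin n → ℝ, ∀ i, (S *ᵥ u) i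
      = c i * u i - w i * (∑ j, w j * u j) := by
    intro u i
    have h1 : (S *ᵥ u) i = ∑ j, ((if i = j then c i else 0) - w i * w j) * u j := by
      simp only [Matrix.mulVec, dotProduct, hSapp]
    rw [h1]
    calc ∑ j, ((if i = j then c i else 0) - w i * w j) * u j
        = ∑ j, ((if i = j then c i * u j else 0) - w i * (w j * u j)) := by
          apply Finset.sum_congr rfl; intro j _
          by_cases h : i = j
          · simp only [if_pos h]; ring
          · simp only [if_neg h]; ring
      _ = (∑ j, if i = j then c i * u j else 0) - ∑ j, w i * (w j * u j) :=
          Finset.sum_sub_distrib _ _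
      _ = c i * u i - w i * ∑ j, w j * u j := by
          rw [Finset.sum_ite_eq, if_pos (Finset.mem_univ i), ← Finset.mul_sum]
  -- S is positive semidefinite
  have hwsqrt : ∀ i, w i = Real.sqrt (xbar i) * Real.sqrt (c i) := by
    intro i
    rw [← Real.sqrt_mul (hx0 i).le]
    have hxc : xbar i * c i = (xbar i * xbar i) / y i := by
      simp only [hcdef]; ring
    rw [hxc, Real.sqrt_div (mul_self_nonneg (xbar i)) (y i),
      Real.sqrt_mul_self (hx0 i).le]
  have hPSD : S.PosSemidef := by
    refine Matrix.posSemidef_iff_dotProduct_mulVec.2 ⟨hSherm, fun u => ?_⟩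
    have hst : star u = u := by funext i; exact star_trivial _
    rw [hst]
    have hd : dotProduct u (S *ᵥ u)
        = (∑ i, c i * (u i)^2) - (∑ i, w i * u i)^2 := by
      simp only [dotProduct]
      calc ∑ i, u i * (S *ᵥ u) i
          = ∑ i, (c i * (u i)^2 - (w i * u i) * (∑ j, w j * u j)) := by
            apply Finset.sum_congr rfl; intro i _; rw [hSmul]; ring
        _ = (∑ i, c i * (u i)^2) - (∑ i, w i * u i) * (∑ j, w j * u j) := by
            rw [Finset.sum_sub_distrib, ← Finset.sum_mul]
        _ = _ := by ring
    rw [hd]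
    have hCS := Finset.sum_mul_sq_le_sq_mul_sq Finset.univ
      (fun i => Real.sqrt (xbar i)) (fun i => Real.sqrt (c i) * u i)
    have he1 : ∀ i, Real.sqrt (xbar i) * (Real.sqrt (c i) * u i) = w i * u i := by
      intro i; rw [hwsqrt i]; ring
    have he2 : ∀ i, (Real.sqrt (xbar i))^2 = xbar i := fun i => Real.sq_sqrt (hx0 i).le
    have he3 : ∀ i, (Real.sqrt (c i) * u i)^2 = c i * (u i)^2 := by
      intro i; rw [mul_pow, Real.sq_sqrt (hc i).le]
    simp only [he1, he2, he3, hxsum, one_mul] at hCS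
    linarith
  -- kernel of S
  have hSq : S *ᵥ q = 0 := by
    funext i
    rw [hSmul]
    have : ∑ j, w j * q j = 1 := by
      rw [Finset.sum_congr rfl fun j _ => hwq j]; exact hxsum
    rw [this]
    have := hcq i
    simp only [Pi.zero_apply]
    linarith
  have hker : LinearMap.ker S.mulVecLin = Submodule.span ℝ {q} := by
    apply le_antisymm
    · intro u hu
      have hu' : S *ᵥ u = 0 := hu
      refine Submodule.mem_span_singleton.2 ⟨∑ j, w j * u j, ?_⟩
      funext i
      have h0 : c i * u i - w i * (∑ j, w j * u j) = 0 := by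
        rw [← hSmul u i, hu']; rfl
      have hci := (hc i).ne'
      have h1 : c i * u i = c i * (q i * (∑ j, w j * u j)) := by
        rw [← mul_assoc, hcq]; linarith
      have h2 : u i = q i * (∑ j, w j * u j) := mul_left_cancel₀ hci h1
      rw [Pi.smul_apply, smul_eq_mul, h2]
      ring
    · rw [Submodule.span_le, Set.singleton_subset_iff]
      exact LinearMap.mem_ker.2 (by rw [Matrix.mulVecLin_apply]; exact hSq)
  have hqne : q ≠ 0 := by
    intro h
    have := congrFun h ⟨0, by omega⟩
    exact (hq _).ne' this
  have hkerrank : Module.finrank ℝ (LinearMap.ker S.mulVecLin) = 1 := by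
    rw [hker, finrank_span_singleton hqne]
  have hrn := LinearMap.finrank_range_add_finrank_ker S.mulVecLin
  rw [Module.finrank_fin_fun, hkerrank] at hrn
  have hrank : S.rank = n - 1 := by
    rw [Matrix.rank]
    omega
  -- eigenvalues
  set ev : Fin n → ℝ := hSherm.eigenvalues with hevdef
  have hEVnn : ∀ i, 0 ≤ ev i := hPSD.eigenvalues_nonneg
  have hcard1 : Fintype.card {i // ev i ≠ 0} = n - 1 := by
    rw [← hSherm.rank_eq_card_non_zero_eigs]
    exact hrank
  have hcard0 : Fintype.card {i // ev i = 0} = 1 := by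
    have h2 : Fintype.card {i // ¬ (ev i = 0)} =
        Fintype.card (Fin n) - Fintype.card {i // ev i = 0} := Fintype.card_subtype_compl _
    have h3 : Fintype.card {i // ev i = 0} ≤ Fintype.card (Fin n) := Fintype.card_subtype_le _
    simp only [Fintype.card_fin] at h2 h3
    have h4 : Fintype.card {i // ev i ≠ 0} = Fintype.card {i // ¬ (ev i = 0)} := rfl
    omega
  -- charpoly of S via spectral theorem
  set U : Matrix (Fin n) (Fin n) ℝ := (hSherm.eigenvectorUnitary : Matrix (Fin n) (Fin n) ℝ)
    with hUdef
  have hUU : U * star U = 1 := Matrix.mem_unitaryGroup_iff.mp hSherm.eigenvectorUnitary.2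
  have hUU' : star U * U = 1 := Matrix.mem_unitaryGroup_iff'.mp hSherm.eigenvectorUnitary.2
  set D : Matrix (Fin n) (Fin n) ℝ := Matrix.diagonal ev with hDdef
  have hDco : Matrix.diagonal (RCLike.ofReal ∘ ev) = D := by
    rw [hDdef]; congr 1
  have hspec : S = U * D * star U := by
    rw [← hDco]; exact hSherm.spectral_theorem
  have hSU : S * U = U * D := by
    rw [hspec, mul_assoc, mul_assoc, hUU', mul_one]
  have hUdet : U.det ≠ 0 := by
    intro h
    have := congrArg Matrix.det hUU
    rw [Matrix.det_mul, h, zero_mul, Matrix.det_one] at this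
    exact zero_ne_one this
  have hScp : S.charpoly = ∏ i, (X - C (ev i)) := by
    rw [my_charpoly_eq_of_mul_eq S D U hUdet hSU, hDdef, my_charpoly_diagonal]
  -- trace of S and sum of eigenvalues
  have htrS : S.trace = 1 := by
    rw [Matrix.trace]
    have : ∀ i, S.diag i = xbar i := by
      intro i; rw [Matrix.diag_apply, hSapp, if_pos rfl, hA]
    rw [Finset.sum_congr rfl fun i _ => this i]
    exact hxsum
  have hevsum : ∑ i, ev i = 1 := by
    have h1 : S.trace = D.trace := by
      rw [hspec, Matrix.trace_mul_cycle, hUU', one_mul]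
    rw [htrS, hDdef, Matrix.trace_diagonal] at h1
    exact h1.symm
  -- the complex charpoly
  have hpoly : Matrix.charpoly (M.map (algebraMap ℝ ℂ))
      = ∏ i, (X - C ((ev i : ℂ))) := by
    rw [Matrix.charpoly_map, hMS, hScp, Polynomial.map_prod]
    apply Finset.prod_congr rfl
    intro i _
    rw [Polynomial.map_sub, Polynomial.map_X, Polynomial.map_C]
    norm_num
  have hPne : (∏ i : Fin n, (X - C ((ev i : ℂ)))) ≠ 0 :=
    Finset.prod_ne_zero_iff.2 fun i _ => Polynomial.X_sub_C_ne_zero _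
  have hprodms : (∏ i : Fin n, (X - C ((ev i : ℂ))))
      = (Multiset.map (fun a : ℂ => X - C a)
          (Multiset.map (fun i => ((ev i : ℂ))) Finset.univ.val)).prod := by
    rw [Multiset.map_map]
    rfl
  have hroots : (∏ i : Fin n, (X - C ((ev i : ℂ)))).roots
      = Multiset.map (fun i => ((ev i : ℂ))) Finset.univ.val := by
    rw [hprodms, Polynomial.roots_multiset_prod_X_sub_C]
  have hmem : ∀ μ : ℂ, (Matrix.charpoly (M.map (algebraMap ℝ ℂ))).IsRoot μ →
      ∃ i, ((ev i : ℂ)) = μ := by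
    intro μ h
    rw [hpoly] at h
    have hmu : μ ∈ (∏ i : Fin n, (X - C ((ev i : ℂ)))).roots :=
      (Polynomial.mem_roots hPne).2 h
    rw [hroots] at hmu
    obtain ⟨i, -, hi⟩ := Multiset.mem_map.1 hmu
    exact ⟨i, hi⟩
  refine ⟨?_, ?_, ?_, ?_⟩
  · intro μ h
    obtain ⟨i, rfl⟩ := hmem μ h
    exact Complex.ofReal_im _
  · rw [Matrix.trace]
    have : ∀ i, M.diag i = xbar i := by
      intro i; rw [Matrix.diag_apply, hM, if_pos rfl]
    rw [Finset.sum_congr rfl fun i _ => this i]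
    exact hxsum
  · rw [← Polynomial.count_roots, hpoly, hroots, Multiset.count_map]
    have hfe : Multiset.filter (fun a => (0 : ℂ) = ((ev a : ℂ))) Finset.univ.val
        = (Finset.filter (fun a => ev a = 0) Finset.univ).val := by
      rw [Finset.filter_val]
      apply Multiset.filter_congr
      intro i _
      constructor
      · intro h; exact_mod_cast h.symm
      · intro h; exact_mod_cast h.symm
    rw [hfe]
    have : (Finset.filter (fun a => ev a = 0) Finset.univ).card
        = Fintype.card {i // ev i = 0} := (Fintype.card_subtype _).symm
    rw [← Finset.card_def, ← Fintype.card_subtype, hcard0]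
  · intro μ h hmu
    obtain ⟨i, rfl⟩ := hmem μ h
    have hine : ev i ≠ 0 := by
      intro h0
      apply hmu
      rw [h0]; norm_num
    have hipos : 0 < ev i := lt_of_le_of_ne (hEVnn i) (Ne.symm hine)
    refine ⟨Complex.ofReal_im _, ?_, ?_⟩
    · rw [Complex.ofReal_re]; exact hipos
    · rw [Complex.ofReal_re]
      obtain ⟨j, hji, hj0⟩ : ∃ j, j ≠ i ∧ ev j ≠ 0 := by
        by_contra hcon
        push_neg at hcon
        have hle : Fintype.card {k // ev k ≠ 0} ≤ 1 := by
          apply Fintype.card_le_one_iff.2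
          rintro ⟨a, ha⟩ ⟨b, hb⟩
          have ha' : a = i := by by_contra h'; exact ha (hcon a h')
          have hb' : b = i := by by_contra h'; exact hb (hcon b h')
          simp [ha', hb']
        rw [hcard1] at hle
        omega
      have hje : ev j ≤ ∑ k ∈ Finset.univ.erase i, ev k :=
        Finset.single_le_sum (fun k _ => hEVnn k)
          (Finset.mem_erase.2 ⟨hji, Finset.mem_univ j⟩)
      have hsplit : ev i + ∑ k ∈ Finset.univ.erase i, ev k = 1 := by
        rw [Finset.add_sum_erase _ _ (Finset.mem_univ i)]; exact hevsum
      have hjpos : 0 < ev j := lt_of_le_of_ne (hEVnn j) (Ne.symm hj0)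
      linarith
end

section
/- Suppose in addition that γ_i < 1/2 for every i. Then G has exactly one fixed point in Δ_n that is not a vertex: there exists a unique x̄ ∈ Δ_n with x̄ ∉ {e_1, …, e_n} and G(x̄) = x̄. -/
/-- The unit simplex `Δₙ = {x ∈ ℝⁿ : xᵢ ≥ 0, ∑ xᵢ = 1}`. -/
def simplexDF (n : ℕ) : Set (Fin n → ℝ) :=
  {x | (∀ i, 0 ≤ x i) ∧ ∑ i, x i = 1}

lemma sqrtDF_combo (α u v l μ : ℝ) (hl : 0 ≤ l) (hμ : 0 ≤ μ) (hlμ : l + μ = 1) :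
    Real.sqrt (α^2 + (l*u + μ*v)^2) ≤
      l * Real.sqrt (α^2 + u^2) + μ * Real.sqrt (α^2 + v^2) := by
  set A := Real.sqrt (α^2 + u^2) with hA
  set B := Real.sqrt (α^2 + v^2) with hB
  have hA0 : 0 ≤ A := Real.sqrt_nonneg _
  have hB0 : 0 ≤ B := Real.sqrt_nonneg _
  have hA2 : A^2 = α^2 + u^2 := Real.sq_sqrt (by positivity)
  have hB2 : B^2 = α^2 + v^2 := Real.sq_sqrt (by positivity)
  have hAB : α^2 + u*v ≤ A*B := by
    rcases le_or_gt (α^2 + u*v) 0 with h | h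
    · exact h.trans (by positivity)
    · have hABsq : (A*B)^2 = (α^2+u^2)*(α^2+v^2) := by rw [mul_pow, hA2, hB2]
      nlinarith [sq_nonneg (α*(u-v)), sq_nonneg (A*B - (α^2+u*v)), mul_nonneg hA0 hB0]
  have key : (α^2 + (l*u + μ*v)^2) ≤ (l*A + μ*B)^2 := by
    have : (l*A + μ*B)^2 = l^2*(α^2+u^2) + μ^2*(α^2+v^2) + 2*l*μ*(A*B) := by
      rw [← hA2, ← hB2]; ring
    have h1 : (l+μ)^2 = 1 := by rw [hlμ]; norm_num
    nlinarith [mul_nonneg (mul_nonneg hl hμ) (sub_nonneg.2 hAB)]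
  calc Real.sqrt (α^2 + (l*u + μ*v)^2) ≤ Real.sqrt ((l*A+μ*B)^2) := Real.sqrt_le_sqrt key
    _ = l*A + μ*B := Real.sqrt_sq (by positivity)

/-- The small root of `x(1-x) = r t (1-t)`. -/
noncomputable def fDF (r t : ℝ) : ℝ := (1 - Real.sqrt ((1 - r) + r * (2*t - 1)^2)) / 2

lemma qDF_nonneg (r t : ℝ) (hr0 : 0 ≤ r) (hr1 : r ≤ 1) :
    0 ≤ (1 - r) + r * (2*t - 1)^2 := by nlinarith [sq_nonneg (2*t-1)]

lemma fDF_concave (r a b l μ : ℝ) (hr0 : 0 ≤ r) (hr1 : r ≤ 1)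
    (hl : 0 ≤ l) (hμ : 0 ≤ μ) (hlμ : l + μ = 1) :
    l * fDF r a + μ * fDF r b ≤ fDF r (l*a + μ*b) := by
  unfold fDF
  have key : Real.sqrt ((1 - r) + r * (2*(l*a + μ*b) - 1)^2) ≤
      l * Real.sqrt ((1 - r) + r * (2*a - 1)^2) + μ * Real.sqrt ((1 - r) + r * (2*b - 1)^2) := by
    have hα : Real.sqrt (1-r) ^ 2 = 1 - r := Real.sq_sqrt (by linarith)
    have hβ : Real.sqrt r ^ 2 = r := Real.sq_sqrt hr0
    have e1 : ∀ t : ℝ, (1 - r) + r * (2*t - 1)^2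
        = Real.sqrt (1-r)^2 + (Real.sqrt r * (2*t-1))^2 := by
      intro t; rw [mul_pow, hα, hβ]
    rw [e1, e1, e1]
    have e2 : Real.sqrt r * (2*(l*a + μ*b) - 1)
        = l * (Real.sqrt r * (2*a-1)) + μ * (Real.sqrt r * (2*b-1)) := by
      have : 2*(l*a + μ*b) - 1 = l*(2*a-1) + μ*(2*b-1) := by nlinarith []
      rw [this]; ring
    rw [e2]
    exact sqrtDF_combo _ _ _ _ _ hl hμ hlμ
  linarith

lemma fDF_zero (r : ℝ) : fDF r 0 = 0 := by
  unfold fDF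
  have : (1 - r) + r * (2*(0:ℝ) - 1)^2 = 1 := by ring
  rw [this, Real.sqrt_one]; ring

lemma fDF_one (r : ℝ) : fDF r 1 = 0 := by
  unfold fDF
  have : (1 - r) + r * (2*(1:ℝ) - 1)^2 = 1 := by ring
  rw [this, Real.sqrt_one]; ring

lemma fDF_le_half (r t : ℝ) : fDF r t ≤ 1/2 := by
  unfold fDF
  have := Real.sqrt_nonneg ((1 - r) + r * (2*t - 1)^2)
  linarith

lemma fDF_pos (r t : ℝ) (hr0 : 0 < r) (hr1 : r ≤ 1) (ht0 : 0 < t) (ht1 : t < 1) :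
    0 < fDF r t := by
  unfold fDF
  have hq : (1 - r) + r * (2*t - 1)^2 < 1 := by nlinarith [mul_pos ht0 (by linarith : 0 < 1 - t)]
  have : Real.sqrt ((1 - r) + r * (2*t - 1)^2) < 1 := by
    calc Real.sqrt ((1 - r) + r * (2*t - 1)^2) < Real.sqrt 1 := by
          apply Real.sqrt_lt_sqrt (qDF_nonneg r t hr0.le hr1) hq
      _ = 1 := Real.sqrt_one
  linarith

/-- The defining quadratic identity for `fDF`. -/
lemma fDF_quad (r t : ℝ) (hr0 : 0 ≤ r) (hr1 : r ≤ 1) :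
    fDF r t * (1 - fDF r t) = r * (t * (1 - t)) := by
  unfold fDF
  have hq : Real.sqrt ((1 - r) + r * (2*t - 1)^2) ^ 2 = (1 - r) + r * (2*t - 1)^2 :=
    Real.sq_sqrt (qDF_nonneg r t hr0 hr1)
  nlinarith [hq]

/-- If `x ≤ 1/2` satisfies the quadratic, it equals `fDF`. -/
lemma fDF_eq_of_quad (r t x : ℝ) (hx : x ≤ 1/2)
    (hquad : x * (1 - x) = r * (t * (1 - t))) :
    fDF r t = x := by
  unfold fDF
  have e : (1 - r) + r * (2*t - 1)^2 = (1 - 2*x)^2 := by nlinarith []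
  rw [e, Real.sqrt_sq (by linarith)]; ring

lemma fDF_ge (r t : ℝ) (hr0 : 0 ≤ r) (hr1 : r ≤ 1) (ht0 : 0 ≤ t) (ht1 : t ≤ 1) :
    r * (t * (1 - t)) ≤ fDF r t := by
  unfold fDF
  set a := r * (t * (1 - t)) with ha
  have ha0 : 0 ≤ a := mul_nonneg hr0 (mul_nonneg ht0 (by linarith))
  have ha4 : a ≤ 1/4 := by nlinarith [sq_nonneg (2*t-1)]
  have e : (1 - r) + r * (2*t - 1)^2 = 1 - 4*a := by rw [ha]; ring
  rw [e]
  have : Real.sqrt (1 - 4*a) ≤ 1 - 2*a := by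
    calc Real.sqrt (1-4*a) ≤ Real.sqrt ((1-2*a)^2) := Real.sqrt_le_sqrt (by nlinarith)
      _ = 1 - 2*a := Real.sqrt_sq (by linarith)
  linarith


lemma fDF_continuous (r : ℝ) : Continuous (fun t => (1 - Real.sqrt ((1 - r) + r * (2*t - 1)^2)) / 2) := by
  have h1 : Continuous (fun t : ℝ => (1 - r) + r * (2*t - 1)^2) := by continuity
  have h2 := (Real.continuous_sqrt.comp h1)
  continuity

/-- If the quadratic system holds, `x` is a fixed point of `GDF`. -/
lemma GDF_fixed_of_quad {n : ℕ} (γ x : Fin n → ℝ) (c : ℝ) (hc : 0 < c)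
    (hγpos : ∀ i, 0 < γ i)
    (hx1 : ∀ i, x i < 1) (hsum : ∑ i, x i = 1)
    (hquad : ∀ i, x i * (1 - x i) = c * γ i) :
    GDF γ x = x := by
  set P := ∏ j, (1 - x j) with hP
  have hP0 : 0 < P := Finset.prod_pos (fun j _ => by linarith [hx1 j])
  have hpP : ∀ i, (∏ j ∈ Finset.univ.erase i, (1 - x j)) * (1 - x i) = P := by
    intro i
    rw [hP]
    exact Finset.prod_erase_mul _ _ (Finset.mem_univ i)
  have hterm : ∀ k, γ k * (∏ j ∈ Finset.univ.erase k, (1 - x j)) * c = x k * P := by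
    intro k
    have hpp := hpP k
    have hq := hquad k
    calc γ k * (∏ j ∈ Finset.univ.erase k, (1 - x j)) * c
        = (x k * (1 - x k)) * ∏ j ∈ Finset.univ.erase k, (1 - x j) := by rw [hq]; ring
      _ = x k * ((∏ j ∈ Finset.univ.erase k, (1 - x j)) * (1 - x k)) := by ring
      _ = x k * P := by rw [hpp]
  have hd : dDF γ x * c = P := by
    rw [dDF, Finset.sum_mul]
    calc (∑ k, γ k * (∏ j ∈ Finset.univ.erase k, (1 - x j)) * c)
        = ∑ k, x k * P := by exact Finset.sum_congr rfl (fun k _ => hterm k)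
      _ = (∑ k, x k) * P := by rw [Finset.sum_mul]
      _ = P := by rw [hsum, one_mul]
  have hd0 : dDF γ x ≠ 0 := by
    intro h
    rw [h, zero_mul] at hd
    exact hP0.ne' hd.symm
  funext i
  have h1 : γ i * (∏ j ∈ Finset.univ.erase i, (1 - x j)) = x i * dDF γ x := by
    have h2 : γ i * (∏ j ∈ Finset.univ.erase i, (1 - x j)) * c = (x i * dDF γ x) * c := by
      rw [hterm i, ← hd]; ring
    exact mul_right_cancel₀ hc.ne' h2
  rw [GDF, h1]
  field_simp

/-- A fixed point with all coordinates `< 1` satisfies the quadratic system. -/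
lemma GDF_quad_of_fixed {n : ℕ} (hn : 0 < n) (γ x : Fin n → ℝ)
    (hγpos : ∀ i, 0 < γ i)
    (hx1 : ∀ i, x i < 1) (hfix : GDF γ x = x) :
    ∃ c : ℝ, 0 < c ∧ (∀ i, 0 < x i) ∧ ∀ i, x i * (1 - x i) = c * γ i := by
  set P := ∏ j, (1 - x j) with hP
  have hP0 : 0 < P := Finset.prod_pos (fun j _ => by linarith [hx1 j])
  have hp0 : ∀ i, 0 < ∏ j ∈ Finset.univ.erase i, (1 - x j) := by
    intro i
    exact Finset.prod_pos (fun j _ => by linarith [hx1 j])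
  have hpP : ∀ i, (∏ j ∈ Finset.univ.erase i, (1 - x j)) * (1 - x i) = P := by
    intro i
    rw [hP]
    exact Finset.prod_erase_mul _ _ (Finset.mem_univ i)
  have hd0 : 0 < dDF γ x := by
    rw [dDF]
    apply Finset.sum_pos
    · intro k _
      exact mul_pos (hγpos k) (hp0 k)
    · exact ⟨⟨0, hn⟩, Finset.mem_univ _⟩
  refine ⟨P / dDF γ x, div_pos hP0 hd0, ?_, ?_⟩
  · intro i
    have := congrFun hfix i
    rw [GDF] at this
    rw [← this]
    exact div_pos (mul_pos (hγpos i) (hp0 i)) hd0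
  · intro i
    have := congrFun hfix i
    rw [GDF] at this
    have h1 : x i * dDF γ x = γ i * ∏ j ∈ Finset.univ.erase i, (1 - x j) := by
      rw [← this]
      field_simp
    have h2 : x i * (1 - x i) * dDF γ x = γ i * P := by
      calc x i * (1 - x i) * dDF γ x = (x i * dDF γ x) * (1 - x i) := by ring
        _ = (γ i * ∏ j ∈ Finset.univ.erase i, (1 - x j)) * (1 - x i) := by rw [h1]
        _ = γ i * ((∏ j ∈ Finset.univ.erase i, (1 - x j)) * (1 - x i)) := by ring
        _ = γ i * P := by rw [hpP i]
    field_simp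
    linear_combination h2
set_option maxHeartbeats 1600000 in
/-- **uniqueness part of the paper's Theorem 4.** Suppose in addition that
`γᵢ < 1/2` for every `i`. Then `G` has exactly one fixed point in `Δₙ` that is not a
vertex: there is a unique `x̄ ∈ Δₙ` with `x̄ ∉ {e₁, …, eₙ}` and `G(x̄) = x̄`. -/
theorem GDF_unique_nonvertex_fixed_point
    {n : ℕ} (hn : 3 ≤ n) (γ : Fin n → ℝ)
    (hγpos : ∀ i, 0 < γ i) (hγsum : ∑ i, γ i = 1)
    (hγhalf : ∀ i, γ i < 1 / 2) :
    ∃! x : Fin n → ℝ,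
      x ∈ simplexDF n ∧ (∀ i : Fin n, x ≠ Pi.single i 1) ∧ GDF γ x = x := by
  have hn0 : 0 < n := by omega
  -- the argmax of γ
  obtain ⟨m, -, hm⟩ := Finset.exists_max_image Finset.univ γ ⟨⟨0, hn0⟩, Finset.mem_univ _⟩
  have hm' : ∀ i, γ i ≤ γ m := fun i => hm i (Finset.mem_univ i)
  have hγm : 0 < γ m := hγpos m
  set r : Fin n → ℝ := fun i => γ i / γ m with hrdef
  have hr0 : ∀ i, 0 < r i := fun i => div_pos (hγpos i) hγm
  have hr1 : ∀ i, r i ≤ 1 := fun i => (div_le_one hγm).2 (hm' i)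
  set Φ : ℝ → ℝ := fun t => t + ∑ i ∈ Finset.univ.erase m, fDF (r i) t with hΦdef
  -- basic values of Φ
  have hΦ0 : Φ 0 = 0 := by
    simp only [hΦdef, fDF_zero, Finset.sum_const_zero, add_zero]
  have hΦ1 : Φ 1 = 1 := by
    simp only [hΦdef, fDF_one, Finset.sum_const_zero, add_zero]
  have hΦcont : Continuous Φ := by
    apply continuous_id.add
    exact continuous_finset_sum _ (fun i _ => fDF_continuous (r i))
  -- concavity of Φ
  have hΦconc : ∀ a b l μ : ℝ, 0 ≤ l → 0 ≤ μ → l + μ = 1 →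
      l * Φ a + μ * Φ b ≤ Φ (l*a + μ*b) := by
    intro a b l μ hl hμ hlμ
    have hsum := Finset.sum_le_sum
      (fun i (_ : i ∈ Finset.univ.erase m) => fDF_concave (r i) a b l μ (hr0 i).le (hr1 i) hl hμ hlμ)
    simp only [hΦdef]
    rw [Finset.sum_add_distrib, ← Finset.mul_sum, ← Finset.mul_sum] at hsum
    linarith
  -- the sum of the ratios
  have hrsum : ∑ i ∈ Finset.univ.erase m, r i = (1 - γ m) / γ m := by
    rw [hrdef]
    rw [← Finset.sum_div]
    congr 1
    rw [Finset.sum_erase_eq_sub (Finset.mem_univ m), hγsum]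
  set R : ℝ := (1 - γ m) / γ m with hRdef
  have hR : 1 < R := by
    rw [hRdef, lt_div_iff₀ hγm]
    have := hγhalf m
    linarith
  set ε : ℝ := (R - 1) / (2*R) with hεdef
  have hε0 : 0 < ε := by
    apply div_pos <;> linarith
  have hεhalf : ε < 1/2 := by
    rw [hεdef, div_lt_iff₀ (by linarith : (0:ℝ) < 2*R)]
    linarith
  set t₀ : ℝ := 1 - ε with ht₀def
  have ht₀0 : 0 < t₀ := by rw [ht₀def]; linarith
  have ht₀1 : t₀ < 1 := by rw [ht₀def]; linarith
  -- Φ t₀ > 1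
  have hΦt₀ : 1 < Φ t₀ := by
    have hlow : ∀ i ∈ Finset.univ.erase m, r i * (t₀ * (1 - t₀)) ≤ fDF (r i) t₀ :=
      fun i _ => fDF_ge (r i) t₀ (hr0 i).le (hr1 i) ht₀0.le ht₀1.le
    have hsum := Finset.sum_le_sum hlow
    rw [← Finset.sum_mul, hrsum] at hsum
    have h2Rε : 2*R*ε = R - 1 := by
      rw [hεdef]
      field_simp
    have key : 1 < t₀ + R * (t₀ * (1 - t₀)) := by
      have e1 : 1 - t₀ = ε := by rw [ht₀def]; ring
      rw [e1, ht₀def]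
      nlinarith [mul_pos hε0 (show 0 < R*(1-ε) - 1 by nlinarith [h2Rε])]
    show 1 < t₀ + ∑ i ∈ Finset.univ.erase m, fDF (r i) t₀
    linarith
  -- values of Φ on [t₀, 1) exceed 1
  have hAbove : ∀ s : ℝ, t₀ ≤ s → s < 1 → 1 < Φ s := by
    intro s hs0 hs1
    rcases eq_or_lt_of_le hs0 with rfl | hlt
    · exact hΦt₀
    · set l : ℝ := (1 - s) / (1 - t₀) with hldef
      set μ : ℝ := (s - t₀) / (1 - t₀) with hμdef
      have h1t₀ : (0:ℝ) < 1 - t₀ := by linarith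
      have hl : 0 < l := div_pos (by linarith) h1t₀
      have hμ : 0 < μ := div_pos (by linarith) h1t₀
      have hlμ : l + μ = 1 := by
        rw [hldef, hμdef, ← add_div, div_eq_one_iff_eq h1t₀.ne']
        ring
      have hs : s = l * t₀ + μ * 1 := by
        rw [hldef, hμdef]
        field_simp
        ring
      have := hΦconc t₀ 1 l μ hl.le hμ.le hlμ
      rw [← hs] at this
      rw [hΦ1] at this
      nlinarith [mul_lt_mul_of_pos_left hΦt₀ hl]
  -- roots of Φ in (0,1) are below t₀ and unique
  have hRootLt : ∀ t : ℝ, 0 < t → t < 1 → Φ t = 1 → t < t₀ := by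
    intro t h0 h1 hroot
    by_contra h
    push_neg at h
    exact absurd hroot (hAbove t h h1).ne'
  have hUniq : ∀ t t' : ℝ, 0 < t → t < 1 → 0 < t' → t' < 1 → Φ t = 1 → Φ t' = 1 → t = t' := by
    have key : ∀ t t' : ℝ, 0 < t → t < 1 → 0 < t' → t' < 1 → Φ t = 1 → Φ t' = 1 → t < t' → False := by
      intro t t' h0 h1 h0' h1' hr hr' hlt
      have htt₀ := hRootLt t h0 h1 hr
      have ht't₀ := hRootLt t' h0' h1' hr'
      set l : ℝ := (t₀ - t') / (t₀ - t) with hldef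
      set μ : ℝ := (t' - t) / (t₀ - t) with hμdef
      have hden : (0:ℝ) < t₀ - t := by linarith
      have hl : 0 < l := div_pos (by linarith) hden
      have hμ : 0 < μ := div_pos (by linarith) hden
      have hlμ : l + μ = 1 := by
        rw [hldef, hμdef, ← add_div, div_eq_one_iff_eq hden.ne']
        ring
      have ht' : t' = l * t + μ * t₀ := by
        rw [hldef, hμdef]
        field_simp
        ring
      have := hΦconc t t₀ l μ hl.le hμ.le hlμ
      rw [← ht', hr', hr] at this
      nlinarith [mul_lt_mul_of_pos_left hΦt₀ hμ]
    intro t t' h0 h1 h0' h1' hr hr'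
    rcases lt_trichotomy t t' with h | h | h
    · exact absurd (key t t' h0 h1 h0' h1' hr hr' h) (fun x => x)
    · exact h
    · exact absurd (key t' t h0' h1' h0 h1 hr' hr h) (fun x => x)
  -- existence of a root
  obtain ⟨tstar, htmem, htroot⟩ : ∃ t, t ∈ Set.Ioo (0:ℝ) t₀ ∧ Φ t = 1 := by
    have hsub := intermediate_value_Ioo ht₀0.le hΦcont.continuousOn
    have h1mem : (1:ℝ) ∈ Set.Ioo (Φ 0) (Φ t₀) := by
      rw [hΦ0]
      exact ⟨one_pos, hΦt₀⟩
    obtain ⟨t, htmem, ht⟩ := hsub h1mem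
    exact ⟨t, htmem, ht⟩
  have ht0 : 0 < tstar := htmem.1
  have ht1 : tstar < 1 := lt_trans htmem.2 ht₀1
  -- the fixed point
  set xstar : Fin n → ℝ := fun i => if i = m then tstar else fDF (r i) tstar with hxdef
  have hxm : xstar m = tstar := by rw [hxdef]; simp
  have hxne : ∀ i, i ≠ m → xstar i = fDF (r i) tstar := by
    intro i hi; rw [hxdef]; simp [hi]
  set c : ℝ := tstar * (1 - tstar) / γ m with hcdef
  have hc : 0 < c := div_pos (mul_pos ht0 (by linarith)) hγm
  have hquad : ∀ i, xstar i * (1 - xstar i) = c * γ i := by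
    intro i
    rcases eq_or_ne i m with rfl | hi
    · rw [hxm, hcdef]
      field_simp
    · rw [hxne i hi, fDF_quad (r i) tstar (hr0 i).le (hr1 i), hrdef, hcdef]
      field_simp
  have hx1 : ∀ i, xstar i < 1 := by
    intro i
    rcases eq_or_ne i m with rfl | hi
    · rw [hxm]; exact ht1
    · rw [hxne i hi]; linarith [fDF_le_half (r i) tstar]
  have hx0 : ∀ i, 0 < xstar i := by
    intro i
    rcases eq_or_ne i m with rfl | hi
    · rw [hxm]; exact ht0
    · rw [hxne i hi]; exact fDF_pos (r i) tstar (hr0 i) (hr1 i) ht0 ht1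
  have hxsum : ∑ i, xstar i = 1 := by
    rw [← Finset.add_sum_erase _ xstar (Finset.mem_univ m), hxm]
    rw [Finset.sum_congr rfl (fun i hi => hxne i (Finset.ne_of_mem_erase hi))]
    exact htroot
  have hxfix : GDF γ xstar = xstar := GDF_fixed_of_quad γ xstar c hc hγpos hx1 hxsum hquad
  have hxnv : ∀ i : Fin n, xstar ≠ Pi.single i 1 := by
    intro i h
    have := congrFun h m
    rw [hxm] at this
    rcases eq_or_ne i m with rfl | hi
    · rw [Pi.single_eq_same] at this; linarith
    · rw [Pi.single_eq_of_ne' hi] at this; linarith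
  refine ⟨xstar, ⟨⟨fun i => (hx0 i).le, hxsum⟩, hxnv, hxfix⟩, ?_⟩
  -- uniqueness
  rintro y ⟨⟨hy0, hysum⟩, hynv, hyfix⟩
  -- all coordinates of y are < 1
  have hy1 : ∀ i, y i < 1 := by
    intro j
    by_contra h
    push_neg at h
    have hsplit : y j + ∑ i ∈ Finset.univ.erase j, y i = 1 := by
      rw [Finset.add_sum_erase _ y (Finset.mem_univ j)]; exact hysum
    have hrest : ∑ i ∈ Finset.univ.erase j, y i ≤ 0 := by linarith
    have hrest0 : ∑ i ∈ Finset.univ.erase j, y i = 0 :=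
      le_antisymm hrest (Finset.sum_nonneg (fun i _ => hy0 i))
    have hzero : ∀ i ∈ Finset.univ.erase j, y i = 0 :=
      (Finset.sum_eq_zero_iff_of_nonneg (fun i _ => hy0 i)).1 hrest0
    have hyj : y j = 1 := by linarith
    apply hynv j
    funext i
    rcases eq_or_ne i j with rfl | hij
    · rw [Pi.single_eq_same]; exact hyj
    · rw [Pi.single_eq_of_ne hij]
      exact hzero i (Finset.mem_erase.2 ⟨hij, Finset.mem_univ i⟩)
  obtain ⟨cy, hcy, hy0', hyquad⟩ := GDF_quad_of_fixed hn0 γ y hγpos hy1 hyfix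
  -- every non-m coordinate is at most 1/2
  have hyhalf : ∀ i, i ≠ m → y i ≤ 1/2 := by
    intro i him
    by_contra h
    push_neg at h
    -- y m ≥ 1 - y i
    have hym : 1 - y i ≤ y m := by
      rcases le_or_gt (1/2) (y m) with h' | h'
      · linarith
      · have h1 : y i * (1 - y i) = cy * γ i := hyquad i
        have h2 : y m * (1 - y m) = cy * γ m := hyquad m
        have h3 : cy * γ i ≤ cy * γ m := by
          apply mul_le_mul_of_nonneg_left (hm' i) hcy.le
        have key : ((1 - y i) - y m) * (y i - y m) ≤ 0 := by nlinarith [h1, h2, h3]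
        by_contra hcon
        push_neg at hcon
        have hpos : 0 < y i - y m := by linarith
        nlinarith [mul_pos (show (0:ℝ) < (1 - y i) - y m by linarith) hpos, key]
    -- a third coordinate
    obtain ⟨k, hk⟩ : ∃ k, k ∉ ({i, m} : Finset (Fin n)) := by
      by_contra hco
      push_neg at hco
      have : (Finset.univ : Finset (Fin n)) ⊆ {i, m} := fun k _ => hco k
      have := Finset.card_le_card this
      simp only [Finset.card_univ, Fintype.card_fin] at this
      have h2 : ({i, m} : Finset (Fin n)).card ≤ 2 := Finset.card_insert_le _ _ |>.trans (by simp)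
      omega
    have hki : k ≠ i := fun h => hk (by rw [h]; simp)
    have hkm : k ≠ m := fun h => hk (by rw [h]; simp)
    have hsub : ({k, i, m} : Finset (Fin n)) ⊆ Finset.univ := Finset.subset_univ _
    have hsum3 : y k + y i + y m ≤ 1 := by
      have := Finset.sum_le_sum_of_subset_of_nonneg hsub (fun j _ _ => hy0 j)
      rw [hysum] at this
      have e : ∑ j ∈ ({k, i, m} : Finset (Fin n)), y j = y k + y i + y m := by
        rw [Finset.sum_insert (by simp [hki, hkm]), Finset.sum_insert (by simp [him]),
          Finset.sum_singleton]
        ring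
      linarith [e ▸ this]
    linarith [hy0' k]
  -- non-m coordinates are given by fDF
  have hyform : ∀ i, i ≠ m → y i = fDF (r i) (y m) := by
    intro i him
    refine (fDF_eq_of_quad (r i) (y m) (y i) (hyhalf i him) ?_).symm
    rw [hrdef]
    have h1 : y i * (1 - y i) = cy * γ i := hyquad i
    have h2 : y m * (1 - y m) = cy * γ m := hyquad m
    rw [h1, h2]
    rw [div_mul_eq_mul_div, eq_div_iff hγm.ne']
    ring
  -- Φ (y m) = 1
  have hyroot : Φ (y m) = 1 := by
    simp only [hΦdef]
    rw [Finset.sum_congr rfl (fun i hi => (hyform i (Finset.ne_of_mem_erase hi)).symm)]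
    rw [Finset.add_sum_erase _ y (Finset.mem_univ m)]
    exact hysum
  have hym01 : 0 < y m ∧ y m < 1 := ⟨hy0' m, hy1 m⟩
  have : y m = tstar := hUniq (y m) tstar hym01.1 hym01.2 ht0 ht1 hyroot htroot
  funext i
  rcases eq_or_ne i m with rfl | hi
  · rw [hxm, this]
  · rw [hxne i hi, hyform i hi, this]
end

section
/- For every x ∈ ℝⁿ with x_j < 1 for all j, the Jacobian matrix J(x) of G at x (with entries J_{ii} = G_i(x)(1 − G_i(x))/(1 − x_i) and J_{ij} = −G_i(x)G_j(x)/(1 − x_j) for j ≠ i) has all complex eigenvalues real and nonnegative, and the eigenvalue 0 has algebraic multiplicity exactly one, all other eigenvalues being strictly positive. -/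
open Matrix Polynomial Finset

/-- charpoly is invariant under conjugation `P * A * Q` with `P * Q = 1`. -/
lemma charpoly_conj_aux {R : Type*} [CommRing R] {m : Type*} [DecidableEq m] [Fintype m]
    (P A Q : Matrix m m R) (hPQ : P * Q = 1) :
    (P * A * Q).charpoly = A.charpoly := by
  have h1 : charmatrix (P * A * Q) = P.map C * charmatrix A * Q.map C := by
    rw [charmatrix, charmatrix, mul_sub, sub_mul, RingHom.mapMatrix_apply,
      RingHom.mapMatrix_apply, Matrix.map_mul, Matrix.map_mul]
    congr 1
    rw [← (scalar_commute (X : R[X]) (fun r => Commute.all _ _) (P.map C)).eq, mul_assoc,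
      ← Matrix.map_mul, hPQ, Matrix.map_one C (map_zero C) (map_one C), mul_one]
  have h2 : (P.map (C : R →+* R[X])).det * (Q.map (C : R →+* R[X])).det = 1 := by
    rw [← det_mul, ← Matrix.map_mul, hPQ, Matrix.map_one C (map_zero C) (map_one C), det_one]
  calc (P * A * Q).charpoly = (charmatrix (P * A * Q)).det := rfl
    _ = (P.map C).det * (charmatrix A).det * (Q.map C).det := by rw [h1, det_mul, det_mul]
    _ = (charmatrix A).det * ((P.map C).det * (Q.map C).det) := by ring
    _ = A.charpoly := by rw [h2, mul_one]; rfl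

/-- charpoly of a real symmetric matrix is the product of `X - C λᵢ`. -/
lemma charpoly_eq_prod_eigs {m : Type*} [DecidableEq m] [Fintype m] [LinearOrder m]
    {A : Matrix m m ℝ} (hA : A.IsHermitian) :
    A.charpoly = ∏ i, (X - C (hA.eigenvalues i)) := by
  have h := hA.spectral_theorem
  have hU : (hA.eigenvectorUnitary : Matrix m m ℝ) * (star hA.eigenvectorUnitary : Matrix m m ℝ) = 1 := by
    exact_mod_cast Unitary.mul_star_self_of_mem (hA.eigenvectorUnitary).2
  calc A.charpoly
      = ((hA.eigenvectorUnitary : Matrix m m ℝ) * diagonal (RCLike.ofReal ∘ hA.eigenvalues) *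
          (star hA.eigenvectorUnitary : Matrix m m ℝ)).charpoly := by rw [Unitary.conjStarAlgAut_apply] at h; rw [← h]
    _ = (diagonal (RCLike.ofReal ∘ hA.eigenvalues)).charpoly := charpoly_conj_aux _ _ _ hU
    _ = ∏ i, (X - C (hA.eigenvalues i)) := by
        classical
        rw [Matrix.charpoly_of_upperTriangular _ (Matrix.blockTriangular_diagonal _)]
        refine Finset.prod_congr rfl fun i _ => ?_
        simp [diagonal_apply_eq]

lemma cs_aux {n : ℕ} (g w : Fin n → ℝ) (hg : ∀ i, 0 ≤ g i) (hgs : ∑ i, g i = 1) :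
    (∑ i, g i * w i) ^ 2 ≤ ∑ i, g i * w i ^ 2 := by
  have cs := Finset.sum_mul_sq_le_sq_mul_sq Finset.univ
    (fun i => Real.sqrt (g i)) (fun i => Real.sqrt (g i) * w i)
  have e1 : ∀ i : Fin n, Real.sqrt (g i) * (Real.sqrt (g i) * w i) = g i * w i := by
    intro i; rw [← mul_assoc, Real.mul_self_sqrt (hg i)]
  have e2 : ∀ i : Fin n, Real.sqrt (g i) ^ 2 = g i := fun i => Real.sq_sqrt (hg i)
  have e3 : ∀ i : Fin n, (Real.sqrt (g i) * w i) ^ 2 = g i * w i ^ 2 := by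
    intro i; rw [mul_pow, e2 i]
  rw [Finset.sum_congr rfl (fun i _ => e1 i), Finset.sum_congr rfl (fun i _ => e2 i),
    Finset.sum_congr rfl (fun i _ => e3 i), hgs, one_mul] at cs
  exact cs

theorem GDF_jacobian_eigenvalues_everywhere'
    {n : ℕ} (hn : 3 ≤ n) (γ : Fin n → ℝ)
    (hγpos : ∀ i, 0 < γ i) (hγsum : ∑ i, γ i = 1)
    (x : Fin n → ℝ) (hx : ∀ j, x j < 1)
    (g : Fin n → ℝ) (hg : ∀ i, 0 < g i) (hgs : ∑ i, g i = 1)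
    (J : Matrix (Fin n) (Fin n) ℝ)
    (hJ : ∀ i j, J i j =
      if i = j then g i * (1 - g i) / (1 - x i)
      else -(g i * g j / (1 - x j))) :
    (∀ μ : ℂ, (Matrix.charpoly (J.map (algebraMap ℝ ℂ))).IsRoot μ →
      μ.im = 0 ∧ 0 ≤ μ.re) ∧
    (Matrix.charpoly (J.map (algebraMap ℝ ℂ))).rootMultiplicity 0 = 1 ∧
    (∀ μ : ℂ, (Matrix.charpoly (J.map (algebraMap ℝ ℂ))).IsRoot μ → μ ≠ 0 →
      μ.im = 0 ∧ 0 < μ.re) := by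
  classical
  haveI : Nonempty (Fin n) := Fin.pos_iff_nonempty.mp (by omega)
  have ht : ∀ j, 0 < 1 - x j := fun j => by linarith [hx j]
  set u : Fin n → ℝ := fun i => Real.sqrt (1 - x i) with hu_def
  have hu : ∀ i, 0 < u i := fun i => Real.sqrt_pos.mpr (ht i)
  have hx2 : ∀ i, 1 - x i = u i * u i := fun i => (Real.mul_self_sqrt (ht i).le).symm
  set S : Matrix (Fin n) (Fin n) ℝ :=
    Matrix.of (fun i j => ((if i = j then g i else 0) - g i * g j) / (u i * u j)) with hS_def
  -- J is a conjugate of S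
  have hdiag1 : Matrix.diagonal u * Matrix.diagonal (fun i => (u i)⁻¹) = 1 := by
    have h1 : (fun i => u i * (u i)⁻¹) = fun _ => (1:ℝ) :=
      funext fun i => mul_inv_cancel₀ (hu i).ne'
    rw [diagonal_mul_diagonal, h1, diagonal_one]
  have hJ' : J = Matrix.diagonal u * S * Matrix.diagonal (fun i => (u i)⁻¹) := by
    ext i j
    rw [mul_diagonal, diagonal_mul, hJ i j, hS_def]
    by_cases h : i = j
    · subst h
      simp only [of_apply, if_pos rfl, hx2 i]
      field_simp
      rw [if_pos trivial, if_pos trivial]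
      ring
    · simp only [of_apply, if_neg h, hx2 j]
      field_simp
      linear_combination (g i * g j * (u j)⁻¹ ^ 2) * mul_inv_cancel₀ (hu i).ne'
  -- S is symmetric
  have hsym : S.IsHermitian := by
    ext i j
    simp only [conjTranspose_apply, of_apply, star_trivial, hS_def]
    by_cases h : i = j
    · subst h; rfl
    · rw [if_neg (Ne.symm h), if_neg h]; ring
  -- mulVec formula
  have hSv : ∀ v : Fin n → ℝ, ∀ i, (S *ᵥ v) i
      = (g i / u i) * (v i / u i - ∑ j, g j * (v j / u j)) := by
    intro v i
    simp only [mulVec, dotProduct, of_apply, hS_def]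
    have : ∀ j, ((if i = j then g i else 0) - g i * g j) / (u i * u j) * v j
        = (if i = j then g i * v i / (u i * u i) else 0)
          - (g i / u i) * (g j * (v j / u j)) := by
      intro j
      by_cases h : i = j
      · subst h
        rw [if_pos rfl, if_pos rfl]
        field_simp [(hu i).ne']
      · rw [if_neg h, if_neg h]
        field_simp [(hu i).ne', (hu j).ne']
        ring
    rw [Finset.sum_congr rfl (fun j _ => this j), Finset.sum_sub_distrib,
      Finset.sum_ite_eq Finset.univ i (fun _ => g i * v i / (u i * u i)),
      if_pos (Finset.mem_univ i), ← Finset.mul_sum]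
    field_simp
    simp only [div_eq_mul_inv]
    linear_combination (-(g i * ∑ x, g x * v x * (u x)⁻¹) * (u i)⁻¹) * mul_inv_cancel₀ (hu i).ne'
  -- Positive semidefiniteness
  have hpsd : S.PosSemidef := by
    refine Matrix.PosSemidef.of_dotProduct_mulVec_nonneg hsym fun v => ?_
    have h1 : ∀ i, star v i * (S *ᵥ v) i
        = g i * (v i / u i) ^ 2 - (g i * (v i / u i)) * ∑ j, g j * (v j / u j) := by
      intro i
      rw [Pi.star_apply, star_trivial, hSv v i]
      field_simp
      simp only [div_eq_mul_inv]
      linear_combination (v i * g i * (u i)⁻¹ * ∑ x, g x * v x * (u x)⁻¹) * mul_inv_cancel₀ (hu i).ne'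
    have key : star v ⬝ᵥ S *ᵥ v
        = ∑ i, g i * (v i / u i) ^ 2 - (∑ i, g i * (v i / u i)) ^ 2 := by
      rw [dotProduct, Finset.sum_congr rfl (fun i _ => h1 i), Finset.sum_sub_distrib,
        ← Finset.sum_mul, sq]
    rw [key, sub_nonneg]
    exact cs_aux g (fun i => v i / u i) (fun i => (hg i).le) hgs
  -- kernel of S
  have hSu : S *ᵥ u = 0 := by
    funext i
    rw [hSv u i, Pi.zero_apply]
    have : ∀ j : Fin n, g j * (u j / u j) = g j := by
      intro j; rw [div_self (hu j).ne', mul_one]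
    rw [Finset.sum_congr rfl (fun j _ => this j), hgs, div_self (hu i).ne', sub_self, mul_zero]
  have hune : u ≠ 0 := by
    intro h
    exact (hu ⟨0, by omega⟩).ne' (congrFun h ⟨0, by omega⟩)
  have hker : LinearMap.ker S.mulVecLin = Submodule.span ℝ {u} := by
    apply le_antisymm
    · intro v hv
      rw [LinearMap.mem_ker, Matrix.mulVecLin_apply] at hv
      set c : ℝ := ∑ j, g j * (v j / u j) with hc_def
      have hvi : ∀ i, v i = c * u i := by
        intro i
        have h0 := congrFun hv i
        rw [hSv v i, Pi.zero_apply, ← hc_def] at h0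
        have h1 : v i / u i - c = 0 := by
          rcases mul_eq_zero.mp h0 with h | h
          · exact absurd h (div_ne_zero (hg i).ne' (hu i).ne')
          · exact h
        have h2 : v i / u i = c := by linarith
        rw [← h2, div_mul_cancel₀ _ (hu i).ne']
      rw [Submodule.mem_span_singleton]
      exact ⟨c, by funext i; rw [Pi.smul_apply, smul_eq_mul, hvi i]⟩
    · rw [Submodule.span_le, Set.singleton_subset_iff]
      rw [SetLike.mem_coe, LinearMap.mem_ker, Matrix.mulVecLin_apply]
      exact hSu
  have hrank : S.rank + 1 = n := by
    have h1 : Module.finrank ℝ ↥(LinearMap.ker S.mulVecLin) = 1 := by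
      rw [hker]
      exact finrank_span_singleton hune
    have h2 := LinearMap.finrank_range_add_finrank_ker S.mulVecLin
    rw [h1] at h2
    rw [Matrix.rank, h2]
    simp [Module.finrank_pi]
  -- characteristic polynomial over ℂ
  have hcp : (J.map (algebraMap ℝ ℂ)).charpoly
      = ∏ i, (X - C ((hsym.eigenvalues i : ℝ) : ℂ)) := by
    rw [Matrix.charpoly_map, hJ', charpoly_conj_aux _ _ _ hdiag1, charpoly_eq_prod_eigs hsym,
      Polynomial.map_prod]
    refine Finset.prod_congr rfl fun i _ => ?_
    rw [Polynomial.map_sub, Polynomial.map_X, Polynomial.map_C]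
    norm_num
  have hroot : ∀ μ : ℂ, (J.map (algebraMap ℝ ℂ)).charpoly.IsRoot μ ↔
      ∃ i, ((hsym.eigenvalues i : ℝ) : ℂ) = μ := by
    intro μ
    rw [hcp, Polynomial.IsRoot, Polynomial.eval_prod, Finset.prod_eq_zero_iff]
    constructor
    · rintro ⟨i, -, hi⟩
      rw [Polynomial.eval_sub, Polynomial.eval_X, Polynomial.eval_C, sub_eq_zero] at hi
      exact ⟨i, hi.symm⟩
    · rintro ⟨i, hi⟩
      exact ⟨i, Finset.mem_univ i,
        by rw [Polynomial.eval_sub, Polynomial.eval_X, Polynomial.eval_C, sub_eq_zero, ← hi]⟩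
  have hev : ∀ i, 0 ≤ hsym.eigenvalues i := fun i => hpsd.eigenvalues_nonneg i
  -- count of zero eigenvalues
  have hcard : Fintype.card {i // hsym.eigenvalues i = 0} = 1 := by
    have h1 : S.rank = Fintype.card {i // hsym.eigenvalues i ≠ 0} :=
      hsym.rank_eq_card_non_zero_eigs
    have h2 : Fintype.card {i // ¬ hsym.eigenvalues i = 0}
        = Fintype.card (Fin n) - Fintype.card {i // hsym.eigenvalues i = 0} :=
      Fintype.card_subtype_compl _
    have h3 : Fintype.card {i // hsym.eigenvalues i ≠ 0}
        = Fintype.card {i // ¬ hsym.eigenvalues i = 0} := rfl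
    have h4 : Fintype.card {i // hsym.eigenvalues i = 0} ≤ Fintype.card (Fin n) :=
      Fintype.card_subtype_le _
    rw [Fintype.card_fin] at h2 h4
    omega
  have hmult : (J.map (algebraMap ℝ ℂ)).charpoly.rootMultiplicity 0 = 1 := by
    rw [hcp, ← Polynomial.count_roots]
    have hprod : (∏ i, (X - C ((hsym.eigenvalues i : ℝ) : ℂ)))
        = ((Finset.univ.val.map (fun i => ((hsym.eigenvalues i : ℝ) : ℂ))).map
            (fun a => X - C a)).prod := by
      rw [Finset.prod_eq_multiset_prod, Multiset.map_map]
      rfl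
    rw [hprod, Polynomial.roots_multiset_prod_X_sub_C, Multiset.count_map]
    have hfil : Multiset.filter (fun i => (0:ℂ) = ((hsym.eigenvalues i : ℝ) : ℂ))
          Finset.univ.val
        = Multiset.filter (fun i => hsym.eigenvalues i = 0) Finset.univ.val := by
      apply Multiset.filter_congr
      intro i _
      constructor
      · intro h; exact_mod_cast h.symm
      · intro h; rw [h]; norm_num
    rw [hfil, ← Finset.filter_val]
    show (Finset.filter (fun i => hsym.eigenvalues i = 0) Finset.univ).card = 1
    rw [← Fintype.card_subtype]
    exact hcard
  refine ⟨fun μ hμ => ?_, hmult, fun μ hμ hne => ?_⟩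
  · obtain ⟨i, hi⟩ := (hroot μ).1 hμ
    exact ⟨by rw [← hi]; exact Complex.ofReal_im _,
      by rw [← hi, Complex.ofReal_re]; exact hev i⟩
  · obtain ⟨i, hi⟩ := (hroot μ).1 hμ
    have hzne : hsym.eigenvalues i ≠ 0 := by
      intro h
      exact hne (by rw [← hi, h]; norm_num)
    exact ⟨by rw [← hi]; exact Complex.ofReal_im _,
      by rw [← hi, Complex.ofReal_re]; exact lt_of_le_of_ne (hev i) (Ne.symm hzne)⟩


/-- For every `x ∈ ℝⁿ` with `xⱼ < 1` for all `j`, the Jacobian matrix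
`J(x)` of `G` at `x` (with `Jᵢᵢ = Gᵢ(x)(1 − Gᵢ(x))/(1 − xᵢ)` and
`Jᵢⱼ = −Gᵢ(x)Gⱼ(x)/(1 − xⱼ)` for `j ≠ i`) has all complex eigenvalues real and
nonnegative, and the eigenvalue `0` has algebraic multiplicity exactly one, all other
eigenvalues being strictly positive. -/
theorem GDF_jacobian_eigenvalues_everywhere
    {n : ℕ} (hn : 3 ≤ n) (γ : Fin n → ℝ)
    (hγpos : ∀ i, 0 < γ i) (hγsum : ∑ i, γ i = 1)
    (x : Fin n → ℝ) (hx : ∀ j, x j < 1)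
    (J : Matrix (Fin n) (Fin n) ℝ)
    (hJ : ∀ i j, J i j =
      if i = j then GDF γ x i * (1 - GDF γ x i) / (1 - x i)
      else -(GDF γ x i * GDF γ x j / (1 - x j))) :
    (∀ μ : ℂ, (Matrix.charpoly (J.map (algebraMap ℝ ℂ))).IsRoot μ →
      μ.im = 0 ∧ 0 ≤ μ.re) ∧
    (Matrix.charpoly (J.map (algebraMap ℝ ℂ))).rootMultiplicity 0 = 1 ∧
    (∀ μ : ℂ, (Matrix.charpoly (J.map (algebraMap ℝ ℂ))).IsRoot μ → μ ≠ 0 →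
      μ.im = 0 ∧ 0 < μ.re) := by
  haveI : Nonempty (Fin n) := Fin.pos_iff_nonempty.mp (by omega)
  have ht : ∀ j, 0 < 1 - x j := fun j => by linarith [hx j]
  have hprodpos : ∀ k : Fin n, 0 < ∏ j ∈ Finset.univ.erase k, (1 - x j) :=
    fun k => Finset.prod_pos (fun j _ => ht j)
  have hd : 0 < dDF γ x :=
    Finset.sum_pos (fun k _ => mul_pos (hγpos k) (hprodpos k)) Finset.univ_nonempty
  have hg : ∀ i, 0 < GDF γ x i :=
    fun i => div_pos (mul_pos (hγpos i) (hprodpos i)) hd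
  have hgs : ∑ i, GDF γ x i = 1 := by
    unfold GDF
    rw [← Finset.sum_div]
    exact div_self hd.ne'
  exact GDF_jacobian_eigenvalues_everywhere' hn γ hγpos hγsum x hx (GDF γ x) hg hgs J hJ
end
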